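/- Let I be a finite type with a distinguished element e and an involution j ↦ j∨ on I fixing e. Let S be a symmetric I-by-I matrix over ℂ, set dim j := S e j, and assume dim j ≠ 0 for all j, dim e = 1, and dim (j∨) = dim j for all j. Suppose the fusion coefficients N : I → I → I → ℂ satisfy the Verlinde formula S i k * S j k = dim k * ∑_p N i j p * S p k for all i, j, k, and that N i j e = 1 if j = i∨ and N i j e = 0 otherwise. Then the following are equivalent: (1) there exists a vector d̂ : I → ℂ with ∑_j d̂ j * S j i = (1 if i = e else 0) for all i; (2) ∑_k (dim k)² ≠ 0 and for every i, ∑_j dim j * S j i = (∑_k (dim k)²) * (1 if i = e else 0); (3) S is invertible. -/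
import Mathlib

open Matrix BigOperators

section aux
variable {I : Type*} [Fintype I] [DecidableEq I]

lemma key_SYS (e : I) (v : I → I) (S : Matrix I I ℂ) (hS : S.IsSymm)
    (hdim : ∀ j, S e j ≠ 0)
    (N : I → I → I → ℂ)
    (hVer : ∀ i j k, S i k * S j k = S e k * ∑ p, N i j p * S p k)
    (hNe : ∀ i j, N i j e = if j = v i then 1 else 0)
    (dhat : I → ℂ)
    (h1 : ∀ i, ∑ j, dhat j * S j i = if i = e then 1 else 0) :
    S * Matrix.diagonal (fun j => dhat j * (S e j)⁻¹) * S
      = Matrix.of (fun i k => if k = v i then 1 else 0) := by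
  have hsym : ∀ a b, S a b = S b a := fun a b => by
    conv_lhs => rw [← hS]
    rfl
  ext i k
  have hterm : ∀ j, (S * Matrix.diagonal fun j => dhat j * (S e j)⁻¹) i j * S j k
      = ∑ p, N i k p * (dhat j * S j p) := by
    intro j
    rw [Matrix.mul_diagonal]
    calc S i j * (dhat j * (S e j)⁻¹) * S j k
        = dhat j * ((S e j)⁻¹ * (S i j * S k j)) := by rw [hsym j k]; ring
      _ = dhat j * ((S e j)⁻¹ * (S e j * ∑ p, N i k p * S p j)) := by rw [hVer i k j]
      _ = dhat j * ∑ p, N i k p * S p j := by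
            rw [inv_mul_cancel_left₀ (hdim j)]
      _ = ∑ p, N i k p * (dhat j * S j p) := by
            rw [Finset.mul_sum]
            exact Finset.sum_congr rfl fun p _ => by rw [hsym p j]; ring
  rw [Matrix.mul_apply]
  simp only [hterm]
  rw [Finset.sum_comm]
  have h2 : ∀ p, ∑ j, N i k p * (dhat j * S j p) = N i k p * (if p = e then 1 else 0) := by
    intro p
    rw [← Finset.mul_sum, h1 p]
  simp only [h2]
  simp [mul_ite, hNe i k]

end aux

/-- The modularity lemma (Lemma lm-mod-eq): the conditions
1) `1 ∈ im(S)`, 2) `∑_j dim(j) S_{j,i} = D² δ_{i,e}` with `D² = ∑_j dim(j)² ≠ 0`,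
and 3) invertibility of `S`, are all equivalent. -/
theorem stmt_9 {I : Type*} [Fintype I] [DecidableEq I]
    (e : I) (v : I → I) (hv : Function.Involutive v) (hve : v e = e)
    (S : Matrix I I ℂ) (hS : S.IsSymm)
    (hdim : ∀ j, S e j ≠ 0) (hde : S e e = 1)
    (hdual : ∀ j, S e (v j) = S e j)
    (N : I → I → I → ℂ)
    (hVer : ∀ i j k, S i k * S j k = S e k * ∑ p, N i j p * S p k)
    (hNe : ∀ i j, N i j e = if j = v i then 1 else 0) :
    [ (∃ dhat : I → ℂ, ∀ i, ∑ j, dhat j * S j i = if i = e then 1 else 0),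
      ((∑ k, (S e k) ^ 2) ≠ 0 ∧
        ∀ i, ∑ j, S e j * S j i = (∑ k, (S e k) ^ 2) * (if i = e then 1 else 0)),
      IsUnit S ].TFAE := by
  have hsym : ∀ a b, S a b = S b a := fun a b => by
    conv_lhs => rw [← hS]
    rfl
  set C : Matrix I I ℂ := Matrix.of (fun i k => if k = v i then 1 else 0) with hCdef
  have hC2 : C * C = 1 := by
    ext i k
    rw [Matrix.mul_apply]
    simp only [hCdef, Matrix.of_apply, Matrix.one_apply]
    rw [Finset.sum_eq_single (v i)]
    · simp [hv i, eq_comm]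
    · intro b _ hb
      simp [hb]
    · simp
  have hCunit : IsUnit C := ⟨⟨C, C, hC2, hC2⟩, rfl⟩
  tfae_have 1 → 3
  | ⟨dhat, h1⟩ => by
    have hkey := key_SYS e v S hS hdim N hVer hNe dhat h1
    rw [Matrix.isUnit_iff_isUnit_det]
    have hd := congrArg Matrix.det hkey
    rw [Matrix.det_mul, Matrix.det_mul] at hd
    have hCd : IsUnit C.det := (Matrix.isUnit_iff_isUnit_det C).mp hCunit
    rw [← hd] at hCd
    exact isUnit_of_mul_isUnit_right hCd
  tfae_have 3 → 2
  | h3 => by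
    have hdet : IsUnit S.det := (Matrix.isUnit_iff_isUnit_det S).mp h3
    set dhat : I → ℂ := fun j => S⁻¹ e j with hdh
    have h1 : ∀ i, ∑ j, dhat j * S j i = if i = e then 1 else 0 := by
      intro i
      have h := congrFun (congrFun (Matrix.nonsing_inv_mul S hdet) e) i
      rw [Matrix.mul_apply] at h
      rw [h, Matrix.one_apply]
      simp [eq_comm]
    have hkey := key_SYS e v S hS hdim N hVer hNe dhat h1
    set Y : Matrix I I ℂ := Matrix.diagonal (fun j => dhat j * (S e j)⁻¹) with hYdef
    have hinv : S * (Y * S * C) = 1 := by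
      calc S * (Y * S * C) = (S * Y * S) * C := by
            simp only [Matrix.mul_assoc]
        _ = C * C := by rw [hkey]
        _ = 1 := hC2
    have hSinv : S⁻¹ = Y * S * C := Matrix.inv_eq_right_inv hinv
    have hprop : ∀ j, dhat j = dhat e * S e j := by
      intro j
      have hj : dhat j = (Y * S * C) e j := by rw [hdh]; rw [hSinv]
      rw [hj, Matrix.mul_apply]
      have hYS : ∀ m, (Y * S) e m = dhat e * S e m := by
        intro m
        rw [hYdef, Matrix.diagonal_mul, hde]
        simp
      simp only [hYS, hCdef, Matrix.of_apply]
      rw [Finset.sum_eq_single (v j)]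
      · simp [hv j, hdual]
      · intro b _ hb
        have : ¬ j = v b := fun h => hb (by rw [h, hv])
        simp [this]
      · simp
    have hDe : dhat e * (∑ k, (S e k) ^ 2) = 1 := by
      have h := h1 e
      rw [if_pos rfl] at h
      rw [← h, Finset.mul_sum]
      refine Finset.sum_congr rfl fun j _ => ?_
      rw [hprop j, hsym j e]
      ring
    have hD2 : (∑ k, (S e k) ^ 2) ≠ 0 := by
      intro h
      rw [h, mul_zero] at hDe
      exact zero_ne_one hDe
    have hdne : dhat e ≠ 0 := by
      intro h
      rw [h, zero_mul] at hDe
      exact zero_ne_one hDe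
    refine ⟨hD2, fun i => ?_⟩
    apply mul_left_cancel₀ hdne
    have h := h1 i
    calc dhat e * ∑ j, S e j * S j i = ∑ j, dhat j * S j i := by
          rw [Finset.mul_sum]
          exact Finset.sum_congr rfl fun j _ => by rw [hprop j]; ring
      _ = if i = e then 1 else 0 := h
      _ = dhat e * ((∑ k, (S e k) ^ 2) * (if i = e then 1 else 0)) := by
          rw [← mul_assoc, hDe, one_mul]
  tfae_have 2 → 1
  | ⟨hD, h2⟩ => by
    refine ⟨fun j => S e j * (∑ k, (S e k) ^ 2)⁻¹, fun i => ?_⟩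
    calc ∑ j, (S e j * (∑ k, (S e k) ^ 2)⁻¹) * S j i
        = (∑ k, (S e k) ^ 2)⁻¹ * ∑ j, S e j * S j i := by
          rw [Finset.mul_sum]; exact Finset.sum_congr rfl fun j _ => by ring
      _ = if i = e then 1 else 0 := by
          rw [h2 i, inv_mul_cancel_left₀ hD]
  tfae_finish
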